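/- arXiv:0903.3061 — 6 statements merged into one kernel-verified Lean document; each statement's English description precedes it below -/
import Mathlib

section
/- Let d0 > 0 and β > 0, let s ∈ ℝ², and let x1, x2, x3 ∈ ℝ² be three non-collinear points. Define f : ℝ² → ℝ by f(z) = Σ_{i=1}^{3} ( ln( (d0 + ‖z − x_i‖^β) / (d0 + ‖s − x_i‖^β) ) )². Then f(z) = 0 if and only if z = s. -/
open Real

/-- Property of non-collinear sensors: the sum of squared log-power mismatches
vanishes exactly at the source. -/
theorem noncollinear_sensors_unique_zero
    (d0 β : ℝ) (hd0 : 0 < d0) (hβ : 0 < β)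
    (s : EuclideanSpace ℝ (Fin 2))
    (x : Fin 3 → EuclideanSpace ℝ (Fin 2))
    (hnc : ¬ Collinear ℝ (Set.range x))
    (z : EuclideanSpace ℝ (Fin 2)) :
    (∑ i, (Real.log ((d0 + ‖z - x i‖ ^ β) / (d0 + ‖s - x i‖ ^ β))) ^ 2) = 0 ↔ z = s := by
  constructor
  · intro h
    have hpos : ∀ (w : EuclideanSpace ℝ (Fin 2)) i, 0 < d0 + ‖w - x i‖ ^ β := fun w i =>
      add_pos_of_pos_of_nonneg hd0 (Real.rpow_nonneg (norm_nonneg _) _)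
    have hterm : ∀ i ∈ Finset.univ,
        (Real.log ((d0 + ‖z - x i‖ ^ β) / (d0 + ‖s - x i‖ ^ β))) ^ 2 = 0 := by
      rw [← Finset.sum_eq_zero_iff_of_nonneg (fun i _ => sq_nonneg _)]
      exact h
    have hdist : ∀ i, dist (x i) z = dist (x i) s := by
      intro i
      have h0 := hterm i (Finset.mem_univ i)
      rw [pow_eq_zero_iff (by norm_num)] at h0
      have hr : (d0 + ‖z - x i‖ ^ β) / (d0 + ‖s - x i‖ ^ β) = 1 := by
        rcases Real.log_eq_zero.mp h0 with h' | h' | h'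
        · exact absurd h' (ne_of_gt (div_pos (hpos z i) (hpos s i)))
        · exact h'
        · linarith [div_pos (hpos z i) (hpos s i)]
      have heq : d0 + ‖z - x i‖ ^ β = d0 + ‖s - x i‖ ^ β := by
        field_simp at hr
        linarith
      have : ‖z - x i‖ ^ β = ‖s - x i‖ ^ β := by linarith
      have hn : ‖z - x i‖ = ‖s - x i‖ := by
        have := congrArg (· ^ β⁻¹) this
        simpa [Real.rpow_rpow_inv (norm_nonneg _) hβ.ne'] using this
      rw [dist_comm (x i) z, dist_comm (x i) s, dist_eq_norm, dist_eq_norm]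
      exact hn
    by_contra hzs
    apply hnc
    have hsub : Set.range x ⊆ (AffineSubspace.perpBisector z s : Set _) := by
      rintro _ ⟨i, rfl⟩
      exact AffineSubspace.mem_perpBisector_iff_dist_eq.mpr (hdist i)
    have hcoll : Collinear ℝ ((AffineSubspace.perpBisector z s : Set (EuclideanSpace ℝ (Fin 2)))) := by
      rw [collinear_iff_rank_le_one, ← AffineSubspace.direction_eq_vectorSpan,
        AffineSubspace.direction_perpBisector]
      have hne : s -ᵥ z ≠ 0 := vsub_ne_zero.mpr (Ne.symm hzs)
      have h1 : Module.finrank ℝ (ℝ ∙ (s -ᵥ z)) = 1 := finrank_span_singleton hne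
      have h2 : Module.finrank ℝ ((ℝ ∙ (s -ᵥ z))ᗮ : Submodule ℝ (EuclideanSpace ℝ (Fin 2))) = 1 := by
        have := Submodule.finrank_add_finrank_orthogonal (𝕜 := ℝ) (ℝ ∙ (s -ᵥ z))
        have hdim : Module.finrank ℝ (EuclideanSpace ℝ (Fin 2)) = 2 := by
          simp [finrank_euclideanSpace]
        omega
      rw [← Module.finrank_eq_rank, h2]
      norm_num
    exact hcoll.subset hsub
  · rintro rfl
    simp [div_self (ne_of_gt (add_pos_of_pos_of_nonneg hd0 (Real.rpow_nonneg (norm_nonneg _) _)))]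
end

section
/- Let d0 > 0 and β > 0, let N ≥ 3, let x_1, …, x_N ∈ ℝ² be sensor positions such that at least three of them are non-collinear, let W ⊂ ℝ² be a nonempty compact set, and let s ∈ ℝ² with s ∉ W. Then there exists L > 0 such that for every y ∈ W, Σ_{i=1}^{N} ( ln( (d0 + ‖y − x_i‖^β) / (d0 + ‖s − x_i‖^β) ) )² ≥ L. -/
open Real

lemma rpow_inj_on_nonneg {β a b : ℝ} (hβ : 0 < β) (ha : 0 ≤ a) (hb : 0 ≤ b)
    (h : a ^ β = b ^ β) : a = b := by
  rcases lt_trichotomy a b with hlt | heq | hgt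
  · exact absurd h (ne_of_lt (Real.rpow_lt_rpow ha hlt hβ))
  · exact heq
  · exact absurd h.symm (ne_of_lt (Real.rpow_lt_rpow hb hgt hβ))

/-- Existence of a strictly positive lower bound on the summed squared log-power
mismatch over a compact region not containing the source, given at least three
non-collinear sensors. -/
theorem exists_positive_lower_bound
    (d0 β : ℝ) (hd0 : 0 < d0) (hβ : 0 < β)
    (N : ℕ) (hN : 3 ≤ N)
    (x : Fin N → EuclideanSpace ℝ (Fin 2))
    (hnc : ∃ i j k : Fin N,
      ¬ Collinear ℝ ({x i, x j, x k} : Set (EuclideanSpace ℝ (Fin 2))))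
    (W : Set (EuclideanSpace ℝ (Fin 2))) (hWne : W.Nonempty) (hWc : IsCompact W)
    (s : EuclideanSpace ℝ (Fin 2)) (hs : s ∉ W) :
    ∃ L > 0, ∀ y ∈ W,
      L ≤ ∑ i, (Real.log ((d0 + ‖y - x i‖ ^ β) / (d0 + ‖s - x i‖ ^ β))) ^ 2 := by
  obtain ⟨i, j, k, hijk⟩ := hnc
  set f : EuclideanSpace ℝ (Fin 2) → ℝ :=
    fun y => ∑ m, (Real.log ((d0 + ‖y - x m‖ ^ β) / (d0 + ‖s - x m‖ ^ β))) ^ 2 with hf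
  have hpos_den : ∀ (z : EuclideanSpace ℝ (Fin 2)) m, 0 < d0 + ‖z - x m‖ ^ β := fun z m =>
    add_pos_of_pos_of_nonneg hd0 (Real.rpow_nonneg (norm_nonneg _) _)
  have hcont : Continuous f := by
    apply continuous_finset_sum
    intro m _
    apply Continuous.pow
    apply Continuous.log
    · exact ((continuous_const.add
        (((continuous_id.sub continuous_const).norm).rpow_const
          (fun y => Or.inr hβ.le))).div_const _)
    · intro y
      exact ne_of_gt (div_pos (hpos_den y m) (hpos_den s m))
  have hposW : ∀ y ∈ W, 0 < f y := by
    intro y hyW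
    have hys : y ≠ s := fun h => hs (h ▸ hyW)
    -- find a sensor with different distances
    have : ∃ m : Fin N, ‖y - x m‖ ≠ ‖s - x m‖ := by
      by_contra h
      push_neg at h
      apply hijk
      have hsub : ({x i, x j, x k} : Set (EuclideanSpace ℝ (Fin 2))) ⊆
          (AffineSubspace.perpBisector y s : Set (EuclideanSpace ℝ (Fin 2))) := by
        intro p hp
        simp only [Set.mem_insert_iff, Set.mem_singleton_iff] at hp
        have key : ∀ m, x m ∈ AffineSubspace.perpBisector y s := by
          intro m
          rw [AffineSubspace.mem_perpBisector_iff_dist_eq]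
          simpa [dist_eq_norm, norm_sub_rev] using h m
        rcases hp with rfl | rfl | rfl <;> exact key _
      rw [collinear_iff_rank_le_one]
      have hdir : vectorSpan ℝ ({x i, x j, x k} : Set (EuclideanSpace ℝ (Fin 2))) ≤
          (AffineSubspace.perpBisector y s).direction := by
        apply vectorSpan_mono
        exact hsub
      rw [AffineSubspace.direction_perpBisector] at hdir
      haveI : Fact (Module.finrank ℝ (EuclideanSpace ℝ (Fin 2)) = 1 + 1) :=
        ⟨by simp [finrank_euclideanSpace_fin]⟩
      have hv : (s -ᵥ y : EuclideanSpace ℝ (Fin 2)) ≠ 0 := by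
        simpa [vsub_eq_sub, sub_eq_zero] using (Ne.symm hys)
      have hfr : Module.finrank ℝ ((ℝ ∙ (s -ᵥ y : EuclideanSpace ℝ (Fin 2)))ᗮ) = 1 :=
        Submodule.finrank_orthogonal_span_singleton hv
      calc Module.rank ℝ (vectorSpan ℝ ({x i, x j, x k} : Set (EuclideanSpace ℝ (Fin 2))))
          ≤ Module.rank ℝ ((ℝ ∙ (s -ᵥ y : EuclideanSpace ℝ (Fin 2)))ᗮ) :=
            Submodule.rank_mono hdir
        _ = 1 := by
            rw [← Module.finrank_eq_rank, hfr]; norm_num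
    obtain ⟨m, hm⟩ := this
    have hne1 : (d0 + ‖y - x m‖ ^ β) / (d0 + ‖s - x m‖ ^ β) ≠ 1 := by
      rw [Ne, div_eq_one_iff_eq (ne_of_gt (hpos_den s m))]
      intro hEq
      exact hm (rpow_inj_on_nonneg hβ (norm_nonneg _) (norm_nonneg _)
        (by linarith))
    have hlog : Real.log ((d0 + ‖y - x m‖ ^ β) / (d0 + ‖s - x m‖ ^ β)) ≠ 0 := by
      intro h0
      exact hne1 (Real.exp_log (div_pos (hpos_den y m) (hpos_den s m)) ▸ h0 ▸ Real.exp_zero)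
    apply Finset.sum_pos' (fun n _ => sq_nonneg _)
    exact ⟨m, Finset.mem_univ m, sq_pos_of_ne_zero hlog⟩
  obtain ⟨y0, hy0W, hmin⟩ := hWc.exists_isMinOn hWne hcont.continuousOn
  exact ⟨f y0, hposW y0 hy0W, fun y hy => hmin hy⟩
end

section
/- Let N ≥ 1, let α > 1, let U ≥ 0 and L ≥ 0, and set η = √(U² + L/(α N)) − U. Let g_1, …, g_N and n_1, …, n_N be real numbers such that |g_i| ≤ U for all i, Σ_{i=1}^{N} g_i² ≥ L, and |n_i| ≤ η for all i. Then Σ_{i=1}^{N} (g_i + n_i)² ≥ ((α − 1)/α) · L. -/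
/-- Algebraic perturbation bound for sums of squares (paper's Lemma on the sum bound). -/
theorem perturbed_sum_of_squares_bound
    (N : ℕ) (hN : 1 ≤ N) (α U L : ℝ) (hα : 1 < α) (hU : 0 ≤ U) (hL : 0 ≤ L)
    (η : ℝ) (hη : η = Real.sqrt (U ^ 2 + L / (α * N)) - U)
    (g n : Fin N → ℝ)
    (hg : ∀ i, |g i| ≤ U)
    (hsum : L ≤ ∑ i, (g i) ^ 2)
    (hn : ∀ i, |n i| ≤ η) :
    ((α - 1) / α) * L ≤ ∑ i, (g i + n i) ^ 2 := by
  have hα0 : (0:ℝ) < α := by linarith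
  have hN0 : (0:ℝ) < (N:ℝ) := by exact_mod_cast hN
  have harg : 0 ≤ U ^ 2 + L / (α * N) := by positivity
  have hη0 : 0 ≤ η := by
    rw [hη, sub_nonneg]
    have : U = Real.sqrt (U ^ 2) := by
      rw [Real.sqrt_sq hU]
    rw [this]
    exact Real.sqrt_le_sqrt (by nlinarith [div_nonneg hL (by positivity : (0:ℝ) ≤ α * N)])
  have key : (U + η) ^ 2 = U ^ 2 + L / (α * N) := by
    rw [hη]
    have := Real.sq_sqrt harg
    nlinarith [this]
  have h2 : 2 * U * η ≤ L / (α * N) := by nlinarith [sq_nonneg η]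
  have h3 : (N:ℝ) * (2 * U * η) ≤ L / α := by
    have heq : (N:ℝ) * (L / (α * N)) = L / α := by
      field_simp
    calc (N:ℝ) * (2 * U * η) ≤ (N:ℝ) * (L / (α * N)) := by
          exact mul_le_mul_of_nonneg_left h2 (le_of_lt hN0)
      _ = L / α := heq
  have hpt : ∀ i : Fin N, g i ^ 2 - 2 * U * η ≤ (g i + n i) ^ 2 := by
    intro i
    obtain ⟨h1, h1'⟩ := abs_le.mp (hg i)
    obtain ⟨h4, h4'⟩ := abs_le.mp (hn i)
    nlinarith [mul_nonneg (by linarith : (0:ℝ) ≤ U - g i) (by linarith : (0:ℝ) ≤ η - n i),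
      mul_nonneg (by linarith : (0:ℝ) ≤ U + g i) (by linarith : (0:ℝ) ≤ η + n i),
      sq_nonneg (n i)]
  have hsum2 : ∑ i, (g i ^ 2 - 2 * U * η) ≤ ∑ i, (g i + n i) ^ 2 :=
    Finset.sum_le_sum (fun i _ => hpt i)
  rw [Finset.sum_sub_distrib, Finset.sum_const, Finset.card_univ, Fintype.card_fin,
    nsmul_eq_mul] at hsum2
  have hfin : (α - 1) / α * L = L - L / α * 1 := by
    field_simp
  nlinarith [hsum2, h3, hsum]
end

section
/- Let d0 > 0, β > 0, σ > 0, N ≥ 1, let x_1, …, x_N ∈ ℝ², let s ∈ ℝ², and let W ⊂ ℝ² be a compact measurable set with Lebesgue area A_W. Define g_i(y) = ln( (d0 + ‖y − x_i‖^β) / (d0 + ‖s − x_i‖^β) ). Suppose U ≥ 0 and L ≥ 0 satisfy |g_i(y)| ≤ U for all y ∈ W and all i, and Σ_{i=1}^{N} g_i(y)² ≥ L for all y ∈ W. Set η = √(U² + L/(2N)) − U, and let n_1, …, n_N be real numbers with |n_i| ≤ η for all i. Then ∫_W exp( − Σ_{i=1}^{N} (g_i(y) + n_i)² / (2σ²)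 ) dy ≤ A_W · exp( − L / (4σ²) ). -/
open Real MeasureTheory

/-- Upper bound for the wrong-hypothesis conditional density integral (α = 2). -/
theorem wrong_hypothesis_integral_bound
    (d0 β σ : ℝ) (hd0 : 0 < d0) (hβ : 0 < β) (hσ : 0 < σ)
    (N : ℕ) (hN : 1 ≤ N)
    (x : Fin N → EuclideanSpace ℝ (Fin 2)) (s : EuclideanSpace ℝ (Fin 2))
    (W : Set (EuclideanSpace ℝ (Fin 2))) (hWc : IsCompact W) (hWm : MeasurableSet W)
    (U L : ℝ) (hU : 0 ≤ U) (hL : 0 ≤ L)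
    (hgU : ∀ y ∈ W, ∀ i,
      |Real.log ((d0 + ‖y - x i‖ ^ β) / (d0 + ‖s - x i‖ ^ β))| ≤ U)
    (hgL : ∀ y ∈ W,
      L ≤ ∑ i, (Real.log ((d0 + ‖y - x i‖ ^ β) / (d0 + ‖s - x i‖ ^ β))) ^ 2)
    (η : ℝ) (hη : η = Real.sqrt (U ^ 2 + L / (2 * N)) - U)
    (n : Fin N → ℝ) (hn : ∀ i, |n i| ≤ η) :
    (∫ y in W, Real.exp (-(∑ i,
        (Real.log ((d0 + ‖y - x i‖ ^ β) / (d0 + ‖s - x i‖ ^ β)) + n i) ^ 2)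
        / (2 * σ ^ 2)))
      ≤ (volume W).toReal * Real.exp (-L / (4 * σ ^ 2)) := by
  have hNpos : (0:ℝ) < N := by exact_mod_cast hN
  have harg : (0:ℝ) ≤ U ^ 2 + L / (2 * N) := by positivity
  have hsq : (η + U) ^ 2 = U ^ 2 + L / (2 * N) := by
    rw [hη, sub_add_cancel, Real.sq_sqrt harg]
  have hηnn : 0 ≤ η := by
    rw [hη, sub_nonneg]
    calc U = Real.sqrt (U ^ 2) := by rw [Real.sqrt_sq hU]
    _ ≤ _ := Real.sqrt_le_sqrt (le_add_of_nonneg_right (by positivity))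
  have h2Uη : 2 * U * η ≤ L / (2 * N) := by nlinarith
  -- pointwise bound
  have key : ∀ y ∈ W, Real.exp (-(∑ i,
        (Real.log ((d0 + ‖y - x i‖ ^ β) / (d0 + ‖s - x i‖ ^ β)) + n i) ^ 2)
        / (2 * σ ^ 2)) ≤ Real.exp (-L / (4 * σ ^ 2)) := by
    intro y hy
    set g : Fin N → ℝ := fun i =>
      Real.log ((d0 + ‖y - x i‖ ^ β) / (d0 + ‖s - x i‖ ^ β)) with hg
    have hsum : L / 2 ≤ ∑ i, (g i + n i) ^ 2 := by
      have h1 : ∀ i, g i ^ 2 - 2 * U * η ≤ (g i + n i) ^ 2 := by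
        intro i
        have hgi := hgU y hy i
        have hni := hn i
        have habs : |g i * n i| ≤ U * η := by
          rw [abs_mul]
          exact mul_le_mul hgi hni (abs_nonneg _) hU
        have := abs_le.mp habs
        nlinarith [sq_nonneg (n i)]
      calc L / 2 ≤ L - N * (2 * U * η) := by
            have : (N:ℝ) * (2 * U * η) ≤ (N:ℝ) * (L / (2 * N)) :=
              mul_le_mul_of_nonneg_left h2Uη (le_of_lt hNpos)
            have hNL : (N:ℝ) * (L / (2 * N)) = L / 2 := by
              field_simp
            linarith
        _ = L - ∑ _i : Fin N, (2 * U * η) := by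
            rw [Finset.sum_const, Finset.card_univ, Fintype.card_fin, nsmul_eq_mul]
        _ ≤ (∑ i, g i ^ 2) - ∑ _i : Fin N, (2 * U * η) := by
            have := hgL y hy; simp only [hg]; linarith [hgL y hy]
        _ = ∑ i, (g i ^ 2 - 2 * U * η) := by rw [Finset.sum_sub_distrib]
        _ ≤ ∑ i, (g i + n i) ^ 2 := Finset.sum_le_sum fun i _ => h1 i
    apply Real.exp_le_exp.mpr
    rw [neg_div, neg_div, neg_le_neg_iff]
    rw [div_le_div_iff₀ (by positivity) (by positivity)]
    nlinarith [sq_nonneg σ]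
  -- finish via norm bound
  have hvol : volume W < ⊤ := hWc.measure_lt_top
  have := MeasureTheory.norm_setIntegral_le_of_norm_le_const
    (f := fun y => Real.exp (-(∑ i,
        (Real.log ((d0 + ‖y - x i‖ ^ β) / (d0 + ‖s - x i‖ ^ β)) + n i) ^ 2)
        / (2 * σ ^ 2))) (C := Real.exp (-L / (4 * σ ^ 2))) hvol
    (fun y hy => by rw [Real.norm_eq_abs, abs_of_pos (Real.exp_pos _)]; exact key y hy)
  calc _ ≤ ‖∫ y in W, Real.exp (-(∑ i,
        (Real.log ((d0 + ‖y - x i‖ ^ β) / (d0 + ‖s - x i‖ ^ β)) + n i) ^ 2)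
        / (2 * σ ^ 2))‖ := le_abs_self _
    _ ≤ _ := this.trans_eq (mul_comm _ _)
end

section
/- Let d0 > 0, β > 0, σ > 0, N ≥ 1, let x_1, …, x_N ∈ ℝ², let s ∈ ℝ², let A > 0, and let W_j ⊂ ℝ² be a compact measurable set with Lebesgue area A_j. Define g_i(y) = ln( (d0 + ‖y − x_i‖^β) / (d0 + ‖s − x_i‖^β) ). Suppose U_j ≥ 0 and L_j > 0 satisfy |g_i(y)| ≤ U_j for all y ∈ W_j and all i, and Σ_{i=1}^{N} g_i(y)² ≥ L_j for all y ∈ W_j; set η_j = √(U_j² + L_j/(2N)) − U_j. Let n = (n_1, …, n_N) be independent Gaussian random variables with mean 0 and variance σ², and define the random variable F_j(n) = (1/(A (2πσ²)^{N/2})) ∫_{W_j} exp( − Σ_{i=1}^{N} (g_i(y) + n_i)² / (2σ²) ) dy. Then Prob[ F_j(n) ≤ ε_j(σ) ] ≥ μ_j(σ), where ε_j(σ) = A_j · exp(−L_j/(4σ²)) / (A (2πσ²)^{N/2}) and μ_j(σ) = (1 − 2·Q(η_j/σ))^N. -/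
open Real MeasureTheory ProbabilityTheory

lemma nnreal_sq_ne_zero {σ : ℝ} (hσ : 0 < σ) : (⟨σ ^ 2, sq_nonneg σ⟩ : NNReal) ≠ 0 := by
  intro h
  have h2 : σ ^ 2 = 0 := congrArg NNReal.toReal h
  nlinarith

lemma gauss_tail {σ : ℝ} (hσ : 0 < σ) (a : ℝ) :
    ((gaussianReal 0 ⟨σ ^ 2, sq_nonneg σ⟩) (Set.Ioi a)).toReal
      = (1 / Real.sqrt (2 * Real.pi)) * ∫ y in Set.Ioi (a / σ), Real.exp (-y ^ 2 / 2) := by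
  have hv := nnreal_sq_ne_zero hσ
  rw [gaussianReal_apply_eq_integral _ hv,
    ENNReal.toReal_ofReal (setIntegral_nonneg measurableSet_Ioi fun x _ =>
      gaussianPDFReal_nonneg 0 ⟨σ ^ 2, sq_nonneg σ⟩ x)]
  simp only [gaussianPDFReal, NNReal.coe_mk, sub_zero]
  rw [integral_const_mul]
  have hfun : ∀ x : ℝ, rexp (-x ^ 2 / (2 * σ ^ 2)) = rexp (-(σ⁻¹ * x) ^ 2 / 2) := by
    intro x
    congr 1
    rw [mul_pow, inv_pow]
    field_simp
  change (√(2 * π * σ ^ 2))⁻¹ * ∫ x in Set.Ioi a, rexp (-x ^ 2 / (2 * σ ^ 2)) = _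
  simp_rw [hfun]
  rw [integral_comp_mul_left_Ioi (fun y => rexp (-y ^ 2 / 2)) a (inv_pos.mpr hσ)]
  have hsqrt : Real.sqrt (2 * π * σ ^ 2) = Real.sqrt (2 * π) * σ := by
    rw [Real.sqrt_mul (by positivity), Real.sqrt_sq hσ.le]
  rw [hsqrt, inv_inv, smul_eq_mul, inv_mul_eq_div]
  have h2π : Real.sqrt (2 * π) ≠ 0 := by positivity
  field_simp

lemma gauss_Iio {σ : ℝ} (hσ : 0 < σ) (a : ℝ) :
    (gaussianReal 0 ⟨σ ^ 2, sq_nonneg σ⟩) (Set.Iio (-a))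
      = (gaussianReal 0 ⟨σ ^ 2, sq_nonneg σ⟩) (Set.Ioi a) := by
  have hv := nnreal_sq_ne_zero hσ
  rw [gaussianReal_apply_eq_integral _ hv, gaussianReal_apply_eq_integral _ hv]
  congr 1
  have heven : ∀ x : ℝ, gaussianPDFReal 0 (⟨σ ^ 2, sq_nonneg σ⟩ : NNReal) (-x)
      = gaussianPDFReal 0 (⟨σ ^ 2, sq_nonneg σ⟩ : NNReal) x := by
    intro x
    simp [gaussianPDFReal, neg_sq]
  calc ∫ x in Set.Iio (-a), gaussianPDFReal 0 ⟨σ ^ 2, sq_nonneg σ⟩ x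
      = ∫ x in Set.Iic (-a), gaussianPDFReal 0 ⟨σ ^ 2, sq_nonneg σ⟩ x :=
        (integral_Iic_eq_integral_Iio).symm
    _ = ∫ x in Set.Iic (-a), gaussianPDFReal 0 ⟨σ ^ 2, sq_nonneg σ⟩ (-x) := by
        simp_rw [heven]
    _ = ∫ x in Set.Ioi (-(-a)), gaussianPDFReal 0 ⟨σ ^ 2, sq_nonneg σ⟩ x :=
        integral_comp_neg_Iic (-a) _
    _ = _ := by rw [neg_neg]

lemma gauss_Icc {σ : ℝ} (hσ : 0 < σ) {a : ℝ} (ha : 0 ≤ a) :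
    ((gaussianReal 0 ⟨σ ^ 2, sq_nonneg σ⟩) (Set.Icc (-a) a)).toReal
      = 1 - 2 * ((gaussianReal 0 ⟨σ ^ 2, sq_nonneg σ⟩) (Set.Ioi a)).toReal := by
  set μ1 := gaussianReal 0 (⟨σ ^ 2, sq_nonneg σ⟩ : NNReal) with hμ1
  haveI : IsProbabilityMeasure μ1 := by rw [hμ1]; exact instIsProbabilityMeasureGaussianReal 0 _
  have hdisj : Disjoint (Set.Iio (-a)) (Set.Ioi a) := by
    rw [Set.disjoint_left]
    intro x hx hx'
    simp only [Set.mem_Iio, Set.mem_Ioi] at hx hx'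
    linarith
  have hcompl : μ1 (Set.Icc (-a) a) = 1 - μ1 ((Set.Icc (-a) a)ᶜ) := by
    rw [measure_compl measurableSet_Icc (measure_ne_top _ _), measure_univ,
      ENNReal.sub_sub_cancel ENNReal.one_ne_top prob_le_one]
  have hIccc : (Set.Icc (-a) a)ᶜ = Set.Iio (-a) ∪ Set.Ioi a := by
    ext z
    simp only [Set.mem_compl_iff, Set.mem_Icc, not_and_or, not_le, Set.mem_union,
      Set.mem_Iio, Set.mem_Ioi]
  have hunion : μ1 ((Set.Icc (-a) a)ᶜ) = μ1 (Set.Ioi a) + μ1 (Set.Ioi a) := by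
    rw [hIccc, measure_union hdisj measurableSet_Ioi, gauss_Iio hσ]
  rw [hcompl, hunion, ENNReal.toReal_sub_of_le _ ENNReal.one_ne_top, ENNReal.toReal_one,
    ENNReal.toReal_add (measure_ne_top _ _) (measure_ne_top _ _)]
  · ring
  · rw [← hunion]
    exact prob_le_one

/-- Elimination property of the wrong hypothesis: with probability at least
μ_j(σ) = (1 - 2Q(η_j/σ))^N, the MAP quantity for a region not containing the
source is at most ε_j(σ). -/
theorem elimination_wrong_hypothesis
    (d0 β σ A : ℝ) (hd0 : 0 < d0) (hβ : 0 < β) (hσ : 0 < σ) (hA : 0 < A)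
    (N : ℕ) (hN : 1 ≤ N)
    (x : Fin N → EuclideanSpace ℝ (Fin 2)) (s : EuclideanSpace ℝ (Fin 2))
    (W : Set (EuclideanSpace ℝ (Fin 2))) (hWc : IsCompact W) (hWm : MeasurableSet W)
    (U L : ℝ) (hU : 0 ≤ U) (hL : 0 < L)
    (hgU : ∀ y ∈ W, ∀ i,
      |Real.log ((d0 + ‖y - x i‖ ^ β) / (d0 + ‖s - x i‖ ^ β))| ≤ U)
    (hgL : ∀ y ∈ W,
      L ≤ ∑ i, (Real.log ((d0 + ‖y - x i‖ ^ β) / (d0 + ‖s - x i‖ ^ β))) ^ 2)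
    (η : ℝ) (hη : η = Real.sqrt (U ^ 2 + L / (2 * N)) - U)
    (ε : ℝ) (hε : ε = (volume W).toReal * Real.exp (-L / (4 * σ ^ 2))
        / (A * (2 * Real.pi * σ ^ 2) ^ ((N : ℝ) / 2)))
    (Q : ℝ → ℝ)
    (hQ : ∀ t : ℝ, Q t = (1 / Real.sqrt (2 * Real.pi))
        * ∫ y in Set.Ioi t, Real.exp (-y ^ 2 / 2)) :
    ((Measure.pi fun _ : Fin N => gaussianReal 0 ⟨σ ^ 2, sq_nonneg σ⟩)
        {n : Fin N → ℝ |
          (1 / (A * (2 * Real.pi * σ ^ 2) ^ ((N : ℝ) / 2))) *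
            ∫ y in W, Real.exp (-(∑ i,
              (Real.log ((d0 + ‖y - x i‖ ^ β) / (d0 + ‖s - x i‖ ^ β)) + n i) ^ 2)
              / (2 * σ ^ 2)) ≤ ε}).toReal
      ≥ (1 - 2 * Q (η / σ)) ^ N := by
  have hN1 : (1 : ℝ) ≤ (N : ℝ) := by exact_mod_cast hN
  have hNpos : (0 : ℝ) < (N : ℝ) := lt_of_lt_of_le one_pos hN1
  -- η is nonnegative
  have hη0 : 0 ≤ η := by
    rw [hη]
    have h2 : Real.sqrt (U ^ 2) ≤ Real.sqrt (U ^ 2 + L / (2 * N)) :=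
      Real.sqrt_le_sqrt (by nlinarith [div_pos hL (by positivity : (0:ℝ) < 2 * N)])
    rw [Real.sqrt_sq hU] at h2
    linarith
  have hsum_sq : 2 * U * η + η ^ 2 = L / (2 * N) := by
    have h1 : U + η = Real.sqrt (U ^ 2 + L / (2 * N)) := by rw [hη]; ring
    have h2 : (U + η) ^ 2 = U ^ 2 + L / (2 * N) := by
      rw [h1]; exact Real.sq_sqrt (by positivity)
    nlinarith
  set μ1 := gaussianReal 0 (⟨σ ^ 2, sq_nonneg σ⟩ : NNReal) with hμ1
  haveI : IsProbabilityMeasure μ1 := by rw [hμ1]; exact instIsProbabilityMeasureGaussianReal 0 _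
  set μN := Measure.pi fun _ : Fin N => μ1 with hμN
  haveI : IsProbabilityMeasure μN := by rw [hμN]; infer_instance
  set E : Set (Fin N → ℝ) := Set.univ.pi fun _ => Set.Icc (-η) η with hE
  set K : ℝ := (2 * Real.pi * σ ^ 2) ^ ((N : ℝ) / 2) with hK_def
  have hK : 0 < K := Real.rpow_pos_of_pos (by positivity) _
  have hAK : 0 < A * K := mul_pos hA hK
  have hsub : E ⊆ {n : Fin N → ℝ |
      (1 / (A * K)) *
        ∫ y in W, Real.exp (-(∑ i,
          (Real.log ((d0 + ‖y - x i‖ ^ β) / (d0 + ‖s - x i‖ ^ β)) + n i) ^ 2)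
          / (2 * σ ^ 2)) ≤ ε} := by
    intro n hn
    simp only [hE, Set.mem_pi, Set.mem_univ, forall_true_left, Set.mem_Icc] at hn
    have hn' : ∀ i, |n i| ≤ η := fun i => abs_le.mpr (hn i)
    simp only [Set.mem_setOf_eq]
    have hC : ∀ y ∈ W, ‖Real.exp (-(∑ i,
        (Real.log ((d0 + ‖y - x i‖ ^ β) / (d0 + ‖s - x i‖ ^ β)) + n i) ^ 2)
        / (2 * σ ^ 2))‖ ≤ Real.exp (-L / (4 * σ ^ 2)) := by
      intro y hy
      set G : Fin N → ℝ :=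
        fun i => Real.log ((d0 + ‖y - x i‖ ^ β) / (d0 + ‖s - x i‖ ^ β)) with hG
      rw [Real.norm_eq_abs, abs_of_pos (Real.exp_pos _), Real.exp_le_exp]
      have hterm : ∀ i, (G i) ^ 2 - (2 * U * η + η ^ 2) ≤ (G i + n i) ^ 2 := by
        intro i
        have h1 := hgU y hy i
        have h2 := hn' i
        have h3 : |G i * n i| ≤ U * η := by
          rw [abs_mul]
          exact mul_le_mul h1 h2 (abs_nonneg _) hU
        nlinarith [neg_abs_le (G i * n i), sq_nonneg (n i)]
      have hhalf : L / 2 ≤ ∑ i, (G i + n i) ^ 2 := by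
        have hsum := Finset.sum_le_sum (fun i (_ : i ∈ Finset.univ) => hterm i)
        rw [Finset.sum_sub_distrib, Finset.sum_const, Finset.card_univ,
          Fintype.card_fin, nsmul_eq_mul] at hsum
        have hL' := hgL y hy
        have hNc : (N : ℝ) * (2 * U * η + η ^ 2) = L / 2 := by
          rw [hsum_sq]; field_simp
        linarith
      have h2σ : (0 : ℝ) < 2 * σ ^ 2 := by positivity
      have hfinal : -(∑ i, (G i + n i) ^ 2) / (2 * σ ^ 2) ≤ (-(L / 2)) / (2 * σ ^ 2) :=
        (div_le_div_iff_of_pos_right h2σ).mpr (by linarith)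
      have heq : (-(L / 2)) / (2 * σ ^ 2) = -L / (4 * σ ^ 2) := by ring
      rw [heq] at hfinal
      exact hfinal
    have hfin : volume W < ⊤ := hWc.measure_lt_top
    have hint : ∫ y in W, Real.exp (-(∑ i,
        (Real.log ((d0 + ‖y - x i‖ ^ β) / (d0 + ‖s - x i‖ ^ β)) + n i) ^ 2)
        / (2 * σ ^ 2)) ≤ Real.exp (-L / (4 * σ ^ 2)) * (volume W).toReal := by
      calc ∫ y in W, Real.exp (-(∑ i,
            (Real.log ((d0 + ‖y - x i‖ ^ β) / (d0 + ‖s - x i‖ ^ β)) + n i) ^ 2)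
            / (2 * σ ^ 2))
          ≤ ‖∫ y in W, Real.exp (-(∑ i,
            (Real.log ((d0 + ‖y - x i‖ ^ β) / (d0 + ‖s - x i‖ ^ β)) + n i) ^ 2)
            / (2 * σ ^ 2))‖ := le_abs_self _
        _ ≤ Real.exp (-L / (4 * σ ^ 2)) * (volume W).toReal :=
            norm_setIntegral_le_of_norm_le_const_ae hfin
              ((ae_restrict_iff' hWm).mpr (ae_of_all _ hC))
    rw [hε]
    calc (1 / (A * K)) * ∫ y in W, Real.exp (-(∑ i,
          (Real.log ((d0 + ‖y - x i‖ ^ β) / (d0 + ‖s - x i‖ ^ β)) + n i) ^ 2)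
          / (2 * σ ^ 2))
        ≤ (1 / (A * K)) * (Real.exp (-L / (4 * σ ^ 2)) * (volume W).toReal) := by
          apply mul_le_mul_of_nonneg_left hint (by positivity)
      _ = (volume W).toReal * Real.exp (-L / (4 * σ ^ 2)) / (A * K) := by ring
  have hmono : μN E ≤ μN {n : Fin N → ℝ |
      (1 / (A * K)) *
        ∫ y in W, Real.exp (-(∑ i,
          (Real.log ((d0 + ‖y - x i‖ ^ β) / (d0 + ‖s - x i‖ ^ β)) + n i) ^ 2)
          / (2 * σ ^ 2)) ≤ ε} := measure_mono hsub
  have h1 : (μN E).toReal ≤ (μN {n : Fin N → ℝ |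
      (1 / (A * K)) *
        ∫ y in W, Real.exp (-(∑ i,
          (Real.log ((d0 + ‖y - x i‖ ^ β) / (d0 + ‖s - x i‖ ^ β)) + n i) ^ 2)
          / (2 * σ ^ 2)) ≤ ε}).toReal :=
    ENNReal.toReal_mono (measure_ne_top _ _) hmono
  have h2 : μN E = (μ1 (Set.Icc (-η) η)) ^ N := by
    rw [hE, hμN, Measure.pi_pi]
    simp [Finset.prod_const]
  have h4 : (μ1 (Set.Icc (-η) η)).toReal = 1 - 2 * Q (η / σ) := by
    rw [hμ1, gauss_Icc hσ hη0, hQ, gauss_tail hσ]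
  calc (1 - 2 * Q (η / σ)) ^ N = ((μ1 (Set.Icc (-η) η)).toReal) ^ N := by rw [h4]
    _ = (μN E).toReal := by rw [h2, ENNReal.toReal_pow]
    _ ≤ _ := h1
end

section
/- Let d0 > 0, β > 0, σ > 0, N ≥ 1, let x_1, …, x_N ∈ ℝ², let s ∈ ℝ², let A > 0, and let W_1, …, W_N ⊂ ℝ² be compact measurable sets with Lebesgue areas A_1, …, A_N. Define g_i(y) = ln( (d0 + ‖y − x_i‖^β) / (d0 + ‖s − x_i‖^β) ), and for each region index l define the random variable F_l(n) = (1/(A (2πσ²)^{N/2})) ∫_{W_l} exp( − Σ_{i=1}^{N} (g_i(y) + n_i)² / (2σ²) ) dy, where n = (n_1, …, n_N) are independent Gaussian random variables with mean 0 and variance σ². Fix an index i, and suppose that for every j ≠ i there are constants U_j ≥ 0 and L_j > 0 with |g_m(y)| ≤ U_j and Σ_{m=1}^{N} g_m(y)² ≥ L_j for all y ∈ W_j and all m; set η_j = √(U_j² + L_j/(2N)) − U_j and ε_j(σ) = A_j exp(−L_j/(4σ²)) / (A (2πσ²)^{N/2}). Then Prob[ F_i(n) ≥ Σ_{l=1}^{N}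 F_l(n) − Σ_{j ≠ i} ε_j(σ) ] ≥ Π_{j ≠ i} (1 − 2·Q(η_j/σ))^N. -/
open Real MeasureTheory ProbabilityTheory

lemma aux_vne (σ : ℝ) (hσ : 0 < σ) : (⟨σ ^ 2, sq_nonneg σ⟩ : NNReal) ≠ 0 := by
  intro h
  have h2 : ((⟨σ ^ 2, sq_nonneg σ⟩ : NNReal) : ℝ) = 0 := by rw [h]; simp
  have : σ ^ 2 = 0 := h2
  nlinarith

lemma aux_gauss_set (σ : ℝ) (hσ : 0 < σ) {s : Set ℝ} (hs : MeasurableSet s) :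
    ((gaussianReal 0 ⟨σ ^ 2, sq_nonneg σ⟩) s).toReal
      = ∫ x in s, gaussianPDFReal 0 ⟨σ ^ 2, sq_nonneg σ⟩ x := by
  rw [gaussianReal_apply_eq_integral 0 (aux_vne σ hσ)]
  exact ENNReal.toReal_ofReal (setIntegral_nonneg hs fun y _ => gaussianPDFReal_nonneg _ _ y)

lemma aux_pdf_eq (σ : ℝ) (hσ : 0 < σ) (x : ℝ) :
    gaussianPDFReal 0 ⟨σ ^ 2, sq_nonneg σ⟩ x
      = (Real.sqrt (2 * Real.pi) * σ)⁻¹ * Real.exp (-(σ⁻¹ * x) ^ 2 / 2) := by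
  unfold gaussianPDFReal
  have hcoe : ((⟨σ ^ 2, sq_nonneg σ⟩ : NNReal) : ℝ) = σ ^ 2 := rfl
  change (Real.sqrt (2 * π * σ ^ 2))⁻¹ * Real.exp (-(x - 0) ^ 2 / (2 * σ ^ 2)) = _
  congr 1
  · rw [show 2 * π * σ ^ 2 = (2 * π) * σ ^ 2 by ring,
      Real.sqrt_mul (by positivity) (σ ^ 2), Real.sqrt_sq hσ.le]
  · have h : -(x - 0) ^ 2 / (2 * σ ^ 2) = -(σ⁻¹ * x) ^ 2 / 2 := by
      rw [sub_zero, show (σ⁻¹ * x) ^ 2 = x ^ 2 / σ ^ 2 by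
        rw [mul_pow, inv_pow, inv_mul_eq_div], neg_div, neg_div, div_div]
      ring_nf
    rw [h]

lemma aux_gauss_Ioi (σ : ℝ) (hσ : 0 < σ) (t : ℝ) :
    ((gaussianReal 0 ⟨σ ^ 2, sq_nonneg σ⟩) (Set.Ioi t)).toReal
      = (1 / Real.sqrt (2 * Real.pi)) * ∫ y in Set.Ioi (t / σ), Real.exp (-y ^ 2 / 2) := by
  rw [aux_gauss_set σ hσ measurableSet_Ioi]
  simp_rw [aux_pdf_eq σ hσ]
  rw [MeasureTheory.integral_const_mul]
  rw [integral_comp_mul_left_Ioi (fun y => Real.exp (-y ^ 2 / 2)) t (inv_pos.mpr hσ)]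
  rw [smul_eq_mul, inv_inv, show σ⁻¹ * t = t / σ by field_simp]
  have h2π : Real.sqrt (2 * π) ≠ 0 := by positivity
  field_simp

lemma aux_pdf_even (σ : ℝ) (hσ : 0 < σ) (x : ℝ) :
    gaussianPDFReal 0 ⟨σ ^ 2, sq_nonneg σ⟩ (-x) = gaussianPDFReal 0 ⟨σ ^ 2, sq_nonneg σ⟩ x := by
  simp [gaussianPDFReal, neg_sq]

lemma aux_gauss_Iio (σ : ℝ) (hσ : 0 < σ) (t : ℝ) :
    ((gaussianReal 0 ⟨σ ^ 2, sq_nonneg σ⟩) (Set.Iio (-t))).toReal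
      = ((gaussianReal 0 ⟨σ ^ 2, sq_nonneg σ⟩) (Set.Ioi t)).toReal := by
  rw [aux_gauss_set σ hσ measurableSet_Iio, aux_gauss_set σ hσ measurableSet_Ioi]
  rw [← integral_Iic_eq_integral_Iio]
  have h3 := integral_comp_neg_Iic (-t) (gaussianPDFReal 0 ⟨σ ^ 2, sq_nonneg σ⟩)
  simp only [aux_pdf_even σ hσ, neg_neg] at h3
  exact h3

lemma aux_gauss_Icc (σ : ℝ) (hσ : 0 < σ) (t : ℝ) (ht : 0 ≤ t) :
    ((gaussianReal 0 ⟨σ ^ 2, sq_nonneg σ⟩) (Set.Icc (-t) t)).toReal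
      = 1 - 2 * ((1 / Real.sqrt (2 * Real.pi)) * ∫ y in Set.Ioi (t / σ), Real.exp (-y ^ 2 / 2)) := by
  set ν := gaussianReal 0 (⟨σ ^ 2, sq_nonneg σ⟩ : NNReal) with hν
  haveI : IsProbabilityMeasure ν := by rw [hν]; exact instIsProbabilityMeasureGaussianReal 0 _
  have hcomp : (Set.Icc (-t) t)ᶜ = Set.Iio (-t) ∪ Set.Ioi t := by
    ext x
    simp only [Set.mem_compl_iff, Set.mem_Icc, Set.mem_union, Set.mem_Iio, Set.mem_Ioi,
      not_and_or, not_le]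
  have hdisj : Disjoint (Set.Iio (-t)) (Set.Ioi t) :=
    (Set.Iic_disjoint_Ioi (by linarith)).mono_left Set.Iio_subset_Iic_self
  have h1 : ν (Set.Icc (-t) t) + (ν (Set.Iio (-t)) + ν (Set.Ioi t)) = 1 := by
    rw [← measure_union hdisj measurableSet_Ioi, ← hcomp,
      measure_add_measure_compl measurableSet_Icc, measure_univ]
  have h2 := congrArg ENNReal.toReal h1
  rw [ENNReal.toReal_add (measure_ne_top _ _)
      (ENNReal.add_ne_top.mpr ⟨measure_ne_top _ _, measure_ne_top _ _⟩),
    ENNReal.toReal_add (measure_ne_top _ _) (measure_ne_top _ _), ENNReal.toReal_one] at h2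
  have h4 := aux_gauss_Iio σ hσ t
  have h5 := aux_gauss_Ioi σ hσ t
  rw [← hν] at h4 h5
  linarith

/-- Strict positivity for the correct hypothesis: with probability at least
Ω(σ) = ∏_{j ≠ i} (1 - 2Q(η_j/σ))^N, the MAP quantity for the correct region is
lower bounded by the total density minus ∑_{j ≠ i} ε_j(σ). -/
theorem strict_positivity_correct_hypothesis
    (d0 β σ A : ℝ) (hd0 : 0 < d0) (hβ : 0 < β) (hσ : 0 < σ) (hA : 0 < A)
    (N : ℕ) (hN : 1 ≤ N)
    (x : Fin N → EuclideanSpace ℝ (Fin 2)) (s : EuclideanSpace ℝ (Fin 2))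
    (W : Fin N → Set (EuclideanSpace ℝ (Fin 2)))
    (hWc : ∀ l, IsCompact (W l)) (hWm : ∀ l, MeasurableSet (W l))
    (F : (Fin N → ℝ) → Fin N → ℝ)
    (hF : ∀ n l, F n l = (1 / (A * (2 * Real.pi * σ ^ 2) ^ ((N : ℝ) / 2))) *
        ∫ y in W l, Real.exp (-(∑ m,
          (Real.log ((d0 + ‖y - x m‖ ^ β) / (d0 + ‖s - x m‖ ^ β)) + n m) ^ 2)
          / (2 * σ ^ 2)))
    (i : Fin N)
    (U L : Fin N → ℝ) (hU : ∀ j, j ≠ i → 0 ≤ U j) (hL : ∀ j, j ≠ i → 0 < L j)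
    (hgU : ∀ j, j ≠ i → ∀ y ∈ W j, ∀ m,
      |Real.log ((d0 + ‖y - x m‖ ^ β) / (d0 + ‖s - x m‖ ^ β))| ≤ U j)
    (hgL : ∀ j, j ≠ i → ∀ y ∈ W j,
      L j ≤ ∑ m, (Real.log ((d0 + ‖y - x m‖ ^ β) / (d0 + ‖s - x m‖ ^ β))) ^ 2)
    (η : Fin N → ℝ) (hη : ∀ j, η j = Real.sqrt ((U j) ^ 2 + L j / (2 * N)) - U j)
    (ε : Fin N → ℝ)
    (hε : ∀ j, ε j = (volume (W j)).toReal * Real.exp (-(L j) / (4 * σ ^ 2))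
        / (A * (2 * Real.pi * σ ^ 2) ^ ((N : ℝ) / 2)))
    (Q : ℝ → ℝ)
    (hQ : ∀ t : ℝ, Q t = (1 / Real.sqrt (2 * Real.pi))
        * ∫ y in Set.Ioi t, Real.exp (-y ^ 2 / 2)) :
    ((Measure.pi fun _ : Fin N => gaussianReal 0 ⟨σ ^ 2, sq_nonneg σ⟩)
        {n : Fin N → ℝ |
          F n i ≥ (∑ l, F n l) - ∑ j ∈ Finset.univ.erase i, ε j}).toReal
      ≥ ∏ j ∈ Finset.univ.erase i, (1 - 2 * Q (η j / σ)) ^ N := by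
  classical
  set ν : Measure ℝ := gaussianReal 0 ⟨σ ^ 2, sq_nonneg σ⟩ with hν
  haveI : IsProbabilityMeasure ν := by rw [hν]; exact instIsProbabilityMeasureGaussianReal 0 _
  set es : Finset (Fin N) := Finset.univ.erase i with hes
  have hNpos : (0 : ℝ) < N := by exact_mod_cast Nat.lt_of_lt_of_le Nat.zero_lt_one hN
  -- η is nonnegative on es
  have hηnn : ∀ j ∈ es, 0 ≤ η j := by
    intro j hj
    have hji : j ≠ i := Finset.ne_of_mem_erase hj
    have harg : 0 ≤ (U j) ^ 2 + L j / (2 * N) := by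
      have := (hL j hji).le
      positivity
    have hsq := Real.sq_sqrt harg
    have hsn := Real.sqrt_nonneg ((U j) ^ 2 + L j / (2 * N))
    have hLj := (hL j hji).le
    have hUj := hU j hji
    rw [hη j]
    nlinarith [div_nonneg hLj (by positivity : (0:ℝ) ≤ 2 * N)]
  -- Icc probability equals 1 - 2 Q (η j / σ)
  have hIcc : ∀ j ∈ es, (ν (Set.Icc (-(η j)) (η j))).toReal = 1 - 2 * Q (η j / σ) := by
    intro j hj
    rw [hν, aux_gauss_Icc σ hσ (η j) (hηnn j hj), hQ]
  have hp0 : ∀ j ∈ es, 0 ≤ 1 - 2 * Q (η j / σ) := by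
    intro j hj
    rw [← hIcc j hj]; exact ENNReal.toReal_nonneg
  have hp1 : ∀ j ∈ es, 1 - 2 * Q (η j / σ) ≤ 1 := by
    intro j hj
    rw [← hIcc j hj]
    have h1 : ν (Set.Icc (-(η j)) (η j)) ≤ 1 := prob_le_one
    have h2 := ENNReal.toReal_mono ENNReal.one_ne_top h1
    rwa [ENNReal.toReal_one] at h2
  -- the core set T
  set T : Set ℝ := {t : ℝ | ∀ j ∈ es, abs t ≤ η j} with hT
  have hTprob : (ν T).toReal ≥ ∏ j ∈ es, (1 - 2 * Q (η j / σ)) := by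
    by_cases hne : es.Nonempty
    · obtain ⟨j0, hj0, hmin⟩ := es.exists_min_image η hne
      have hsub : Set.Icc (-(η j0)) (η j0) ⊆ T := by
        intro t ht
        rw [Set.mem_Icc] at ht
        intro j hj
        rw [abs_le]
        exact ⟨by linarith [hmin j hj], by linarith [hmin j hj]⟩
      have h1 : (ν (Set.Icc (-(η j0)) (η j0))).toReal ≤ (ν T).toReal :=
        ENNReal.toReal_mono (measure_ne_top _ _) (measure_mono hsub)
      have h2 : ∏ j ∈ es, (1 - 2 * Q (η j / σ)) ≤ 1 - 2 * Q (η j0 / σ) := by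
        rw [← Finset.mul_prod_erase es _ hj0]
        have h3 : ∏ j ∈ es.erase j0, (1 - 2 * Q (η j / σ)) ≤ 1 :=
          Finset.prod_le_one (fun j hj => hp0 j (Finset.mem_of_mem_erase hj))
            (fun j hj => hp1 j (Finset.mem_of_mem_erase hj))
        calc (1 - 2 * Q (η j0 / σ)) * ∏ j ∈ es.erase j0, (1 - 2 * Q (η j / σ))
            ≤ (1 - 2 * Q (η j0 / σ)) * 1 :=
              mul_le_mul_of_nonneg_left h3 (hp0 j0 hj0)
          _ = 1 - 2 * Q (η j0 / σ) := mul_one _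
      calc ∏ j ∈ es, (1 - 2 * Q (η j / σ)) ≤ 1 - 2 * Q (η j0 / σ) := h2
        _ = (ν (Set.Icc (-(η j0)) (η j0))).toReal := (hIcc j0 hj0).symm
        _ ≤ (ν T).toReal := h1
    · rw [Finset.not_nonempty_iff_eq_empty] at hne
      have hTuniv : T = Set.univ := by
        apply Set.eq_univ_iff_forall.mpr
        intro t j hj
        rw [hne] at hj
        exact absurd hj (Finset.notMem_empty j)
      rw [hne, hTuniv, Finset.prod_empty, measure_univ, ENNReal.toReal_one]
  -- the deterministic implication
  have hdenom : 0 < A * (2 * Real.pi * σ ^ 2) ^ ((N : ℝ) / 2) :=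
    mul_pos hA (Real.rpow_pos_of_pos (by positivity) _)
  have hdet : ∀ n : Fin N → ℝ, (∀ m, n m ∈ T) →
      F n i ≥ (∑ l, F n l) - ∑ j ∈ es, ε j := by
    intro n hn
    have hsplit : ∑ l, F n l = F n i + ∑ j ∈ es, F n j :=
      (Finset.add_sum_erase Finset.univ _ (Finset.mem_univ i)).symm
    have hterm : ∀ j ∈ es, F n j ≤ ε j := by
      intro j hj
      have hji : j ≠ i := Finset.ne_of_mem_erase hj
      have hbound : ∀ y ∈ W j,
          ‖Real.exp (-(∑ m,
            (Real.log ((d0 + ‖y - x m‖ ^ β) / (d0 + ‖s - x m‖ ^ β)) + n m) ^ 2)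
            / (2 * σ ^ 2))‖ ≤ Real.exp (-(L j) / (4 * σ ^ 2)) := by
        intro y hy
        rw [Real.norm_eq_abs, abs_of_pos (Real.exp_pos _)]
        apply Real.exp_le_exp.mpr
        have hSge : L j / 2 ≤ ∑ m,
            (Real.log ((d0 + ‖y - x m‖ ^ β) / (d0 + ‖s - x m‖ ^ β)) + n m) ^ 2 := by
          have hterm2 : ∀ m : Fin N,
              (Real.log ((d0 + ‖y - x m‖ ^ β) / (d0 + ‖s - x m‖ ^ β))) ^ 2
                - 2 * (U j * η j) ≤
              (Real.log ((d0 + ‖y - x m‖ ^ β) / (d0 + ‖s - x m‖ ^ β)) + n m) ^ 2 := by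
            intro m
            have h1 : |Real.log ((d0 + ‖y - x m‖ ^ β) / (d0 + ‖s - x m‖ ^ β)) * n m|
                ≤ U j * η j := by
              rw [abs_mul]
              exact mul_le_mul (hgU j hji y hy m) (hn m j hj) (abs_nonneg _) (hU j hji)
            have h2 := abs_le.mp h1
            nlinarith [sq_nonneg (n m),
              neg_abs_le (Real.log ((d0 + ‖y - x m‖ ^ β) / (d0 + ‖s - x m‖ ^ β)) * n m)]
          have hsum := Finset.sum_le_sum (fun m (_ : m ∈ Finset.univ) => hterm2 m)
          rw [Finset.sum_sub_distrib, Finset.sum_const, Finset.card_univ,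
            Fintype.card_fin, nsmul_eq_mul] at hsum
          have hL2 := hgL j hji y hy
          -- 2 U η ≤ L / (2N)
          have harg : 0 ≤ (U j) ^ 2 + L j / (2 * N) := by
            have := (hL j hji).le
            positivity
          have hsq := Real.sq_sqrt harg
          have h2Uη : 2 * (U j * η j) ≤ L j / (2 * N) := by
            rw [hη j]
            nlinarith [sq_nonneg (Real.sqrt ((U j) ^ 2 + L j / (2 * N)) - U j)]
          have h3 : (N : ℝ) * (2 * (U j * η j)) ≤ (N : ℝ) * (L j / (2 * N)) :=
            mul_le_mul_of_nonneg_left h2Uη hNpos.le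
          have h4 : (N : ℝ) * (L j / (2 * N)) = L j / 2 := by
            field_simp
          linarith
        rw [div_le_div_iff₀ (by positivity) (by positivity)]
        nlinarith [hSge, sq_nonneg σ]
      have hI := norm_setIntegral_le_of_norm_le_const ((hWc j).measure_lt_top (μ := volume)) hbound
      rw [Real.norm_eq_abs] at hI
      have hI2 : (∫ y in W j, Real.exp (-(∑ m,
            (Real.log ((d0 + ‖y - x m‖ ^ β) / (d0 + ‖s - x m‖ ^ β)) + n m) ^ 2)
            / (2 * σ ^ 2)))
          ≤ Real.exp (-(L j) / (4 * σ ^ 2)) * (volume (W j)).toReal :=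
        le_trans (le_abs_self _) hI
      rw [hF, hε]
      calc (1 / (A * (2 * Real.pi * σ ^ 2) ^ ((N : ℝ) / 2))) *
            ∫ y in W j, Real.exp (-(∑ m,
              (Real.log ((d0 + ‖y - x m‖ ^ β) / (d0 + ‖s - x m‖ ^ β)) + n m) ^ 2)
              / (2 * σ ^ 2))
          ≤ (1 / (A * (2 * Real.pi * σ ^ 2) ^ ((N : ℝ) / 2))) *
            (Real.exp (-(L j) / (4 * σ ^ 2)) * (volume (W j)).toReal) :=
            mul_le_mul_of_nonneg_left hI2 (by positivity)
        _ = (volume (W j)).toReal * Real.exp (-(L j) / (4 * σ ^ 2))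
            / (A * (2 * Real.pi * σ ^ 2) ^ ((N : ℝ) / 2)) := by ring
    have hsum3 : ∑ j ∈ es, F n j ≤ ∑ j ∈ es, ε j := Finset.sum_le_sum hterm
    rw [ge_iff_le, hsplit]
    linarith
  -- assemble
  have hsub2 : Set.pi Set.univ (fun _ : Fin N => T) ⊆
      {n : Fin N → ℝ | F n i ≥ (∑ l, F n l) - ∑ j ∈ es, ε j} := by
    intro n hn
    exact hdet n (fun m => hn m (Set.mem_univ m))
  have hmono : ((Measure.pi fun _ : Fin N => ν) (Set.pi Set.univ (fun _ : Fin N => T))).toReal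
      ≤ ((Measure.pi fun _ : Fin N => ν)
        {n : Fin N → ℝ | F n i ≥ (∑ l, F n l) - ∑ j ∈ es, ε j}).toReal :=
    ENNReal.toReal_mono (measure_ne_top _ _) (measure_mono hsub2)
  have hpi : ((Measure.pi fun _ : Fin N => ν) (Set.pi Set.univ (fun _ : Fin N => T))).toReal
      = (ν T).toReal ^ N := by
    rw [Measure.pi_pi, ENNReal.toReal_prod, Finset.prod_const, Finset.card_univ,
      Fintype.card_fin]
  have hfinal : ∏ j ∈ es, (1 - 2 * Q (η j / σ)) ^ N ≤ (ν T).toReal ^ N := by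
    rw [Finset.prod_pow]
    exact pow_le_pow_left₀ (Finset.prod_nonneg hp0) hTprob N
  calc ∏ j ∈ es, (1 - 2 * Q (η j / σ)) ^ N ≤ (ν T).toReal ^ N := hfinal
    _ = ((Measure.pi fun _ : Fin N => ν) (Set.pi Set.univ (fun _ : Fin N => T))).toReal :=
        hpi.symm
    _ ≤ _ := hmono
end
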